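/- Let S be a finite set, C a random variable in S, and E1, E2 events conditionally independent given each value of C, with Pr(Ei|C=x) defined for x with Pr(C=x)>0. Then 2[Pr(E1 ∩ E2) − Pr(E1)Pr(E2)] = Σ_{x,y∈S} Δ1(x,y)·Δ2(x,y)·Pr(C=x)·Pr(C=y), where Δi(x,y) = Pr(Ei|C=x) − Pr(Ei|C=y). -/

import Mathlib

open MeasureTheory

theorem stmt_1 {Ω : Type*} [MeasurableSpace Ω] (μ : Measure Ω) [IsProbabilityMeasure μ]
    {S : Type*} [Fintype S] [MeasurableSpace S] [MeasurableSingletonClass S]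
    (C : Ω → S) (hC : Measurable C) (E1 E2 : Set Ω)
    (hE1 : MeasurableSet E1) (hE2 : MeasurableSet E2)
    -- cp x E = Pr(E | C = x); convention: cp x E = 0 when Pr(C = x) = 0
    (cp : S → Set Ω → ℝ)
    (hcp : ∀ x E, 0 < μ (C ⁻¹' {x}) →
      cp x E = (μ (E ∩ C ⁻¹' {x})).toReal / (μ (C ⁻¹' {x})).toReal)
    (hcp0 : ∀ x E, μ (C ⁻¹' {x}) = 0 → cp x E = 0)
    -- conditional independence given each value of C
    (hindep : ∀ x, 0 < μ (C ⁻¹' {x}) → cp x (E1 ∩ E2) = cp x E1 * cp x E2) :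
    2 * ((μ (E1 ∩ E2)).toReal - (μ E1).toReal * (μ E2).toReal)
      = ∑ x : S, ∑ y : S,
          (cp x E1 - cp y E1) * (cp x E2 - cp y E2)
            * (μ (C ⁻¹' {x})).toReal * (μ (C ⁻¹' {y})).toReal := by
  classical
  set p : S → ℝ := fun x => (μ (C ⁻¹' {x})).toReal with hp
  -- total probability decomposition
  have total : ∀ E : Set Ω, MeasurableSet E →
      (μ E).toReal = ∑ x : S, (μ (E ∩ C ⁻¹' {x})).toReal := by
    intro E hE
    have h1 : ∑ x : S, (μ.restrict E) (C ⁻¹' {x}) = (μ.restrict E) (C ⁻¹' Set.univ) := by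
      have := MeasureTheory.sum_measure_preimage_singleton (μ := μ.restrict E) (f := C)
        (Finset.univ : Finset S) (fun b _ => hC (measurableSet_singleton b))
      simpa using this
    have h2 : ∀ x : S, (μ.restrict E) (C ⁻¹' {x}) = μ (E ∩ C ⁻¹' {x}) := by
      intro x
      rw [Measure.restrict_apply (hC (measurableSet_singleton x)), Set.inter_comm]
    have h3 : (μ.restrict E) (C ⁻¹' Set.univ) = μ E := by
      simp [Measure.restrict_apply_univ]
    rw [← h3, ← h1]
    rw [ENNReal.toReal_sum (fun x _ => measure_ne_top _ _)]
    exact Finset.sum_congr rfl fun x _ => by rw [h2 x]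
  have key : ∀ E : Set Ω, MeasurableSet E → (μ E).toReal = ∑ x : S, cp x E * p x := by
    intro E hE
    rw [total E hE]
    refine Finset.sum_congr rfl fun x _ => ?_
    rcases eq_or_lt_of_le (zero_le : 0 ≤ μ (C ⁻¹' {x})) with h | h
    · have h0 : μ (C ⁻¹' {x}) = 0 := h.symm
      have hE0 : μ (E ∩ C ⁻¹' {x}) = 0 := measure_mono_null Set.inter_subset_right h0
      simp [hcp0 x E h0, hE0, hp, h0]
    · have hne : (μ (C ⁻¹' {x})).toReal ≠ 0 :=
        (ENNReal.toReal_pos h.ne' (measure_ne_top μ _)).ne'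
      rw [hcp x E h]
      field_simp [hp]
      rfl
  have psum : ∑ x : S, p x = 1 := by
    have h1 : ∑ x : S, μ (C ⁻¹' {x}) = μ (C ⁻¹' Set.univ) := by
      have := MeasureTheory.sum_measure_preimage_singleton (μ := μ) (f := C)
        (Finset.univ : Finset S) (fun b _ => hC (measurableSet_singleton b))
      simpa using this
    have : ∑ x : S, p x = (∑ x : S, μ (C ⁻¹' {x})).toReal :=
      (ENNReal.toReal_sum (fun x _ => measure_ne_top _ _)).symm
    rw [this, h1]
    simp
  have hM : (μ (E1 ∩ E2)).toReal = ∑ x : S, cp x E1 * cp x E2 * p x := by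
    rw [key (E1 ∩ E2) (hE1.inter hE2)]
    refine Finset.sum_congr rfl fun x _ => ?_
    rcases eq_or_lt_of_le (zero_le : 0 ≤ μ (C ⁻¹' {x})) with h | h
    · simp [hcp0 _ _ h.symm, hp, h.symm]
    · rw [hindep x h]
  have hA := key E1 hE1
  have hB := key E2 hE2
  rw [hM, hA, hB]
  have expand : ∀ x y : S,
      (cp x E1 - cp y E1) * (cp x E2 - cp y E2) * p x * p y
        = (cp x E1 * cp x E2 * p x) * p y + (cp y E1 * cp y E2 * p y) * p x
          - (cp x E1 * p x) * (cp y E2 * p y) - (cp y E1 * p y) * (cp x E2 * p x) := by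
    intro x y; ring
  calc 2 * (∑ x : S, cp x E1 * cp x E2 * p x
        - (∑ x : S, cp x E1 * p x) * (∑ x : S, cp x E2 * p x))
      = (∑ x : S, cp x E1 * cp x E2 * p x) * (∑ y : S, p y)
        + (∑ y : S, cp y E1 * cp y E2 * p y) * (∑ x : S, p x)
        - (∑ x : S, cp x E1 * p x) * (∑ y : S, cp y E2 * p y)
        - (∑ y : S, cp y E1 * p y) * (∑ x : S, cp x E2 * p x) := by
        rw [psum]; ring
    _ = ∑ x : S, ∑ y : S,
          ((cp x E1 * cp x E2 * p x) * p y + (cp y E1 * cp y E2 * p y) * p x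
            - (cp x E1 * p x) * (cp y E2 * p y) - (cp y E1 * p y) * (cp x E2 * p x)) := by
        simp only [Finset.sum_sub_distrib, Finset.sum_add_distrib, ← Finset.sum_mul,
          ← Finset.mul_sum, Finset.mul_sum, Finset.sum_mul]
        rw [Finset.sum_comm (f := fun x y => (cp y E1 * cp y E2 * p y) * p x)]
        rw [Finset.sum_comm (f := fun x y => (cp y E1 * p y) * (cp x E2 * p x))]
    _ = ∑ x : S, ∑ y : S, (cp x E1 - cp y E1) * (cp x E2 - cp y E2) * p x * p y := by
        exact Finset.sum_congr rfl fun x _ => Finset.sum_congr rfl fun y _ => (expand x y).symm
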